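/- Let v be a vertex of the order-k Voronoi diagram, i.e., a point equidistant from exactly three points a,b,c of S, lying in a face f(P_k). Then the circle through a, b, c centered at v encloses in its open disk exactly k−1 points of S if exactly one of a,b,c belongs to P_k (type I vertex), and exactly k−2 points of S if exactly two of a,b,c belong to P_k (type II vertex); moreover all enclosed points belong to P_k. -/
import Mathlib


open scoped Classical

noncomputable abbrev E2 := EuclideanSpace ℝ (Fin 2)

/-- a vertex v of the order-k Voronoi diagram, equidistant (at distance r)
from exactly three points a,b,c of S and lying in the face f(P_k), has its circle
enclosing exactly k−1 points of S if it is of type I (|{a,b,c} ∩ P_k| = 1) and exactly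
k−2 points if it is of type II (|{a,b,c} ∩ P_k| = 2); all enclosed points lie in P_k. -/
theorem orderk_vertex_circle_count
    (S P : Finset E2) (k : ℕ) (hPS : P ⊆ S) (hPcard : P.card = k)
    (v : E2) (a b c : E2) (r : ℝ)
    (haS : a ∈ S) (hbS : b ∈ S) (hcS : c ∈ S)
    (hab : a ≠ b) (hac : a ≠ c) (hbc : b ≠ c)
    (hra : dist v a = r) (hrb : dist v b = r) (hrc : dist v c = r)
    (hother : ∀ s ∈ S, s ≠ a → s ≠ b → s ≠ c → dist v s ≠ r)
    (hv : ∀ p ∈ P, ∀ q ∈ S, q ∉ P → dist v p ≤ dist v q) :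
    ((({a, b, c} : Finset E2) ∩ P).card = 1 →
      (S.filter (fun s => dist v s < r)).card = k - 1
        ∧ ∀ s ∈ S, dist v s < r → s ∈ P)
    ∧ ((({a, b, c} : Finset E2) ∩ P).card = 2 →
      (S.filter (fun s => dist v s < r)).card = k - 2
        ∧ ∀ s ∈ S, dist v s < r → s ∈ P) := by
  set T : Finset E2 := {a, b, c} with hTdef
  have hTsub : T ⊆ S := by
    intro x hx
    simp only [hTdef, Finset.mem_insert, Finset.mem_singleton] at hx
    rcases hx with rfl | rfl | rfl <;> assumption
  have hdistT : ∀ x ∈ T, dist v x = r := by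
    intro x hx
    simp only [hTdef, Finset.mem_insert, Finset.mem_singleton] at hx
    rcases hx with rfl | rfl | rfl <;> assumption
  have hTcard : T.card = 3 := by
    simp [hTdef, hab, hac, hbc]
  have key : ∀ m : ℕ, (T ∩ P).card = m → 1 ≤ m → m ≤ 2 →
      (S.filter (fun s => dist v s < r)).card = k - m
        ∧ ∀ s ∈ S, dist v s < r → s ∈ P := by
    intro m hm h1 h2
    -- a point of T inside P
    obtain ⟨p0, hp0⟩ := Finset.card_pos.mp (by omega : 0 < (T ∩ P).card)
    have hp0T : p0 ∈ T := (Finset.mem_inter.mp hp0).1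
    have hp0P : p0 ∈ P := (Finset.mem_inter.mp hp0).2
    have hp0r : dist v p0 = r := hdistT p0 hp0T
    -- a point of T outside P
    have hexq : ∃ q ∈ T, q ∉ P := by
      by_contra h
      push_neg at h
      have heq : T ∩ P = T := Finset.inter_eq_left.mpr (fun x hx => h x hx)
      rw [heq, hTcard] at hm
      omega
    obtain ⟨q0, hq0T, hq0P⟩ := hexq
    have hq0r : dist v q0 = r := hdistT q0 hq0T
    -- all strictly enclosed points lie in P
    have inside : ∀ s ∈ S, dist v s < r → s ∈ P := by
      intro s hsS hslt
      by_contra hsP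
      have := hv p0 hp0P s hsS hsP
      rw [hp0r] at this
      linarith
    refine ⟨?_, inside⟩
    -- the enclosed set is exactly P \ T
    have hfilter : S.filter (fun s => dist v s < r) = P \ T := by
      ext s
      simp only [Finset.mem_filter, Finset.mem_sdiff]
      constructor
      · rintro ⟨hsS, hslt⟩
        refine ⟨inside s hsS hslt, fun hsT => ?_⟩
        rw [hdistT s hsT] at hslt
        exact lt_irrefl r hslt
      · rintro ⟨hsP, hsT⟩
        have hsS : s ∈ S := hPS hsP
        have hne : dist v s ≠ r := by
          apply hother s hsS
          · intro h; exact hsT (by simp [hTdef, h])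
          · intro h; exact hsT (by simp [hTdef, h])
          · intro h; exact hsT (by simp [hTdef, h])
        have hle : dist v s ≤ r := by
          have := hv s hsP q0 (hTsub hq0T) hq0P
          rwa [hq0r] at this
        exact ⟨hsS, lt_of_le_of_ne hle hne⟩
    rw [hfilter]
    have := Finset.card_sdiff_add_card_inter P T
    rw [Finset.inter_comm P T, hm, hPcard] at this
    omega
  exact ⟨fun h => key 1 h le_rfl (by omega), fun h => key 2 h (by omega) le_rfl⟩
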